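/- For all n ≥ 2, the number of derangements of [n] with exactly one cyclic peak equals 2^{n-2}. -/

import Mathlib

/-- Number of cyclic peaks: letters i with i < pi(i) > pi(pi(i)). -/
def cpk (n : ℕ) (π : Equiv.Perm (Fin n)) : ℕ :=
  (Finset.univ.filter (fun i : Fin n => i < π i ∧ π (π i) < π i)).card

/-- Number of cyclic valleys: letters i with i > pi(i) < pi(pi(i)). -/
def cval (n : ℕ) (π : Equiv.Perm (Fin n)) : ℕ :=
  (Finset.univ.filter (fun i : Fin n => π i < i ∧ π i < π (π i))).card

/-- Number of cyclic double ascents: letters i with i < pi(i) < pi(pi(i)). -/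
def cdasc (n : ℕ) (π : Equiv.Perm (Fin n)) : ℕ :=
  (Finset.univ.filter (fun i : Fin n => i < π i ∧ π i < π (π i))).card

/-- Number of cyclic double descents: letters i with i > pi(i) > pi(pi(i)). -/
def cddes (n : ℕ) (π : Equiv.Perm (Fin n)) : ℕ :=
  (Finset.univ.filter (fun i : Fin n => π i < i ∧ π (π i) < π i)).card

open Finset

section Aux
variable {α : Type*} [Fintype α] [LinearOrder α]

/-- Structure lemma: in a derangement with exactly one cyclic peak,
the peak maps to the top element, and for excedances `i`, `π i` is at most any
other excedance above `i`. -/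
lemma one_peak_structure (π : Equiv.Perm α) (hd : ∀ i, π i ≠ i)
    (h1 : (Finset.univ.filter (fun i => i < π i ∧ π (π i) < π i)).card = 1) :
    (∀ i, i < π i → π (π i) < π i → ∀ x, x ≤ π i) ∧
    (∀ i j, i < π i → i < j → j < π j → π i ≤ j) := by
  classical
  obtain ⟨e, he⟩ := Finset.card_eq_one.mp h1
  have hmem : ∀ i, (i < π i ∧ π (π i) < π i) ↔ i = e := by
    intro i
    constructor
    · intro h
      have hi : i ∈ Finset.univ.filter (fun i => i < π i ∧ π (π i) < π i) := by
        simp [h.1, h.2]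
      rw [he] at hi; simpa using hi
    · intro h
      have hmem' : i ∈ ({e} : Finset α) := by simp [h]
      rw [← he] at hmem'; simpa using hmem'
  have hepk : e < π e ∧ π (π e) < π e := (hmem e).mpr rfl
  have hexit : ∀ i, i < π i → ¬ (π i < π (π i)) → i = e := by
    intro i hi hno
    have hne : π (π i) ≠ π i := fun h => hd i (π.injective h)
    exact (hmem i).mp ⟨hi, lt_of_le_of_ne (not_lt.mp hno) hne⟩
  -- every excedance is ≤ e
  have hEne : (univ.filter fun x => x < π x).Nonempty := ⟨e, by simp [hepk.1]⟩
  have hM : (univ.filter fun x => x < π x).max' hEne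
      < π ((univ.filter fun x => x < π x).max' hEne) := by
    have := Finset.max'_mem _ hEne
    simpa using this
  have hMe : (univ.filter fun x => x < π x).max' hEne = e := by
    apply hexit _ hM
    intro h
    exact absurd (Finset.le_max' _ _ (by simp [h])) (not_le.mpr hM)
  have upper : ∀ j, j < π j → j ≤ e := by
    intro j hj
    rw [← hMe]
    exact Finset.le_max' _ j (by simp [hj])
  -- top element
  have hT : ∀ x, x ≤ π e := by
    have hTu : ∀ x : α, x ≤ (univ : Finset α).max' ⟨e, mem_univ e⟩ :=
      fun x => Finset.le_max' _ x (mem_univ x)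
    set T := (univ : Finset α).max' ⟨e, mem_univ e⟩ with hTdef
    have huT : π.symm T ≠ T := by
      intro h
      have : π T = T := by conv_lhs => rw [← h, π.apply_symm_apply]
      exact hd T this
    have hlt : π.symm T < π (π.symm T) := by
      rw [π.apply_symm_apply]; exact lt_of_le_of_ne (hTu _) huT
    have hexitT : π.symm T = e := by
      apply hexit _ hlt
      rw [π.apply_symm_apply]
      exact not_lt.mpr (le_of_lt (lt_of_le_of_ne (hTu _) (hd T)))
    intro x
    have : π e = T := by rw [← hexitT, π.apply_symm_apply]
    rw [this]; exact hTu x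
  constructor
  · intro i h1' h2'
    have : i = e := (hmem i).mp ⟨h1', h2'⟩
    subst this; exact hT
  · intro i j hi hij hj
    by_contra hcon
    push_neg at hcon
    have hie : i ≠ e := ne_of_lt (lt_of_lt_of_le hij (upper j hj))
    have stay : ∀ x, x < π x → x ≠ e → π x < π (π x) := by
      intro x hx hxe
      by_contra h
      exact hxe (hexit x hx h)
    have hebase : e ∈ univ.filter (fun x => x < π x ∧ j ≤ x) := by simp [hepk.1, upper j hj]
    have hjbase : j ∈ univ.filter (fun x => x < π x ∧ j ≤ x) := by simp [hj]
    have hsurj := Finset.surj_on_of_inj_on_of_card_le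
      (s := (univ.filter (fun x => x < π x ∧ j ≤ x)).erase e)
      (t := (univ.filter (fun x => x < π x ∧ j ≤ x)).erase j) (fun x _ => π x)
      (by
        intro x hx
        simp only [Finset.mem_erase, Finset.mem_filter, Finset.mem_univ, true_and] at hx ⊢
        obtain ⟨hxe, hx1, hx2⟩ := hx
        have hjx : j < π x := lt_of_le_of_lt hx2 hx1
        exact ⟨ne_of_gt hjx, stay x hx1 hxe, le_of_lt hjx⟩)
      (by intro a b _ _ h; exact π.injective h)
      (by rw [Finset.card_erase_of_mem hjbase, Finset.card_erase_of_mem hebase])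
      (π i)
      (by
        simp only [Finset.mem_erase, Finset.mem_filter, Finset.mem_univ, true_and]
        exact ⟨ne_of_gt hcon, stay i hi hie, le_of_lt hcon⟩)
    obtain ⟨x, hx, hxi⟩ := hsurj
    have : x = i := π.injective hxi.symm
    subst this
    simp only [Finset.mem_erase, Finset.mem_filter, Finset.mem_univ, true_and] at hx
    exact absurd hx.2.2 (not_le.mpr hij)

/-- Dual structure lemma, for cyclic valleys. -/
lemma one_valley_structure (π : Equiv.Perm α) (hd : ∀ i, π i ≠ i)
    (h1 : (Finset.univ.filter (fun i => π i < i ∧ π i < π (π i))).card = 1) :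
    (∀ i, π i < i → π i < π (π i) → ∀ x, π i ≤ x) ∧
    (∀ i j, π i < i → j < i → π j < j → j ≤ π i) := by
  classical
  obtain ⟨e, he⟩ := Finset.card_eq_one.mp h1
  have hmem : ∀ i, (π i < i ∧ π i < π (π i)) ↔ i = e := by
    intro i
    constructor
    · intro h
      have hi : i ∈ Finset.univ.filter (fun i => π i < i ∧ π i < π (π i)) := by
        simp [h.1, h.2]
      rw [he] at hi; simpa using hi
    · intro h
      have hmem' : i ∈ ({e} : Finset α) := by simp [h]
      rw [← he] at hmem'; simpa using hmem'
  have hepk : π e < e ∧ π e < π (π e) := (hmem e).mpr rfl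
  have hexit : ∀ i, π i < i → ¬ (π (π i) < π i) → i = e := by
    intro i hi hno
    have hne : π (π i) ≠ π i := fun h => hd i (π.injective h)
    exact (hmem i).mp ⟨hi, lt_of_le_of_ne (not_lt.mp hno) hne.symm⟩
  have hEne : (univ.filter fun x => π x < x).Nonempty := ⟨e, by simp [hepk.1]⟩
  have hM : π ((univ.filter fun x => π x < x).min' hEne)
      < (univ.filter fun x => π x < x).min' hEne := by
    have := Finset.min'_mem _ hEne
    simpa using this
  have hMe : (univ.filter fun x => π x < x).min' hEne = e := by
    apply hexit _ hM
    intro h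
    exact absurd (Finset.min'_le _ _ (by simp [h])) (not_le.mpr hM)
  have lower : ∀ j, π j < j → e ≤ j := by
    intro j hj
    rw [← hMe]
    exact Finset.min'_le _ j (by simp [hj])
  -- bottom element
  have hT : ∀ x, π e ≤ x := by
    have hTu : ∀ x : α, (univ : Finset α).min' ⟨e, mem_univ e⟩ ≤ x :=
      fun x => Finset.min'_le _ x (mem_univ x)
    set T := (univ : Finset α).min' ⟨e, mem_univ e⟩ with hTdef
    have huT : π.symm T ≠ T := by
      intro h
      have : π T = T := by conv_lhs => rw [← h, π.apply_symm_apply]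
      exact hd T this
    have hlt : π (π.symm T) < π.symm T := by
      rw [π.apply_symm_apply]; exact lt_of_le_of_ne (hTu _) (Ne.symm huT)
    have hexitT : π.symm T = e := by
      apply hexit _ hlt
      rw [π.apply_symm_apply]
      exact not_lt.mpr (le_of_lt (lt_of_le_of_ne (hTu _) (Ne.symm (hd T))))
    intro x
    have : π e = T := by rw [← hexitT, π.apply_symm_apply]
    rw [this]; exact hTu x
  constructor
  · intro i h1' h2'
    have : i = e := (hmem i).mp ⟨h1', h2'⟩
    subst this; exact hT
  · intro i j hi hij hj
    by_contra hcon
    push_neg at hcon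
    have hie : i ≠ e := ne_of_gt (lt_of_le_of_lt (lower j hj) hij)
    have stay : ∀ x, π x < x → x ≠ e → π (π x) < π x := by
      intro x hx hxe
      by_contra h
      exact hxe (hexit x hx h)
    have hebase : e ∈ univ.filter (fun x => π x < x ∧ x ≤ j) := by simp [hepk.1, lower j hj]
    have hjbase : j ∈ univ.filter (fun x => π x < x ∧ x ≤ j) := by simp [hj]
    have hsurj := Finset.surj_on_of_inj_on_of_card_le
      (s := (univ.filter (fun x => π x < x ∧ x ≤ j)).erase e)
      (t := (univ.filter (fun x => π x < x ∧ x ≤ j)).erase j) (fun x _ => π x)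
      (by
        intro x hx
        simp only [Finset.mem_erase, Finset.mem_filter, Finset.mem_univ, true_and] at hx ⊢
        obtain ⟨hxe, hx1, hx2⟩ := hx
        have hjx : π x < j := lt_of_lt_of_le hx1 hx2
        exact ⟨ne_of_lt hjx, stay x hx1 hxe, le_of_lt hjx⟩)
      (by intro a b _ _ h; exact π.injective h)
      (by rw [Finset.card_erase_of_mem hjbase, Finset.card_erase_of_mem hebase])
      (π i)
      (by
        simp only [Finset.mem_erase, Finset.mem_filter, Finset.mem_univ, true_and]
        exact ⟨ne_of_lt hcon, stay i hi hie, le_of_lt hcon⟩)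
    obtain ⟨x, hx, hxi⟩ := hsurj
    have : x = i := π.injective hxi.symm
    subst this
    simp only [Finset.mem_erase, Finset.mem_filter, Finset.mem_univ, true_and] at hx
    exact absurd hx.2.2 (not_le.mpr hij)

/-- A derangement has equally many cyclic peaks and cyclic valleys. -/
lemma peak_card_eq_valley_card (π : Equiv.Perm α) (hd : ∀ i, π i ≠ i) :
    (Finset.univ.filter (fun i => i < π i ∧ π (π i) < π i)).card
      = (Finset.univ.filter (fun i => π i < i ∧ π i < π (π i))).card := by
  classical
  have hpart1 : (univ.filter fun i => i < π i).card
      = (univ.filter (fun i => i < π i ∧ π (π i) < π i)).card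
      + (univ.filter (fun i => i < π i ∧ π i < π (π i))).card := by
    rw [← Finset.card_union_of_disjoint (by
      rw [Finset.disjoint_left]
      rintro x hx hx'
      simp only [mem_filter] at hx hx'
      exact absurd hx.2.2 (not_lt.mpr (le_of_lt hx'.2.2)))]
    congr 1
    ext x
    simp only [mem_union, mem_filter, mem_univ, true_and]
    constructor
    · intro hx
      rcases (show π (π x) ≠ π x from fun h => hd x (π.injective h)).lt_or_gt with h | h
      · exact Or.inl ⟨hx, h⟩
      · exact Or.inr ⟨hx, h⟩
    · rintro (⟨h, -⟩ | ⟨h, -⟩) <;> exact h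
  have hpart2 : (univ.filter fun i => π i < π (π i)).card
      = (univ.filter (fun i => π i < i ∧ π i < π (π i))).card
      + (univ.filter (fun i => i < π i ∧ π i < π (π i))).card := by
    rw [← Finset.card_union_of_disjoint (by
      rw [Finset.disjoint_left]
      rintro x hx hx'
      simp only [mem_filter] at hx hx'
      exact absurd hx.2.1 (not_lt.mpr (le_of_lt hx'.2.1)))]
    congr 1
    ext x
    simp only [mem_union, mem_filter, mem_univ, true_and]
    constructor
    · intro hx
      rcases (hd x).lt_or_gt with h | h
      · exact Or.inl ⟨h, hx⟩
      · exact Or.inr ⟨h, hx⟩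
    · rintro (⟨-, h⟩ | ⟨-, h⟩) <;> exact h
  have hbij : (univ.filter fun i => π i < π (π i)).card
      = (univ.filter fun i => i < π i).card := by
    apply Finset.card_bij (fun i _ => π i)
    · intro a ha
      simp only [mem_filter, mem_univ, true_and] at ha ⊢
      exact ha
    · intro a b _ _ h
      exact π.injective h
    · intro b hb
      simp only [mem_filter, mem_univ, true_and] at hb
      refine ⟨π.symm b, ?_, π.apply_symm_apply b⟩
      simp only [mem_filter, mem_univ, true_and, π.apply_symm_apply]
      exact hb
  omega

end Aux

section FinPart
open Finset

/-- The canonical "unimodal cycle" function associated to a set `E` of excedance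
positions: on `E`, step to the next element of `E ∪ {last}`; off `E`, step to the
previous element of `Eᶜ ∪ {0}`. -/
def pfun (m : ℕ) (E : Finset (Fin (m+2))) (i : Fin (m+2)) : Fin (m+2) :=
  if i ∈ E then WithTop.untopD i (((insert (Fin.last (m+1)) E).filter (fun k => i < k)).min)
  else WithBot.unbotD i (((insert (0 : Fin (m+2)) (Finset.univ \ E)).filter (fun k => k < i)).max)

lemma pfun_mem_spec {m : ℕ} {E : Finset (Fin (m+2))} (hEL : Fin.last (m+1) ∉ E)
    {i : Fin (m+2)} (hi : i ∈ E) :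
    i < pfun m E i ∧ pfun m E i ∈ insert (Fin.last (m+1)) E ∧
      ∀ k ∈ insert (Fin.last (m+1)) E, i < k → pfun m E i ≤ k := by
  classical
  have hiL : i < Fin.last (m+1) :=
    lt_of_le_of_ne (Fin.le_last i) (by rintro rfl; exact hEL hi)
  have hne : (((insert (Fin.last (m+1)) E).filter (fun k => i < k))).Nonempty :=
    ⟨Fin.last (m+1), by simp [hiL]⟩
  have hpf : pfun m E i = ((insert (Fin.last (m+1)) E).filter (fun k => i < k)).min' hne := by
    rw [pfun, if_pos hi, ← Finset.coe_min' hne, WithTop.untopD_coe]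
  have hmm := Finset.min'_mem _ hne
  rw [Finset.mem_filter] at hmm
  refine ⟨?_, ?_, ?_⟩
  · rw [hpf]; exact hmm.2
  · rw [hpf]; exact hmm.1
  · intro k hk hik
    rw [hpf]
    exact Finset.min'_le _ k (Finset.mem_filter.mpr ⟨hk, hik⟩)

lemma pfun_not_mem_spec {m : ℕ} {E : Finset (Fin (m+2))} (hE0 : (0 : Fin (m+2)) ∈ E)
    {i : Fin (m+2)} (hi : i ∉ E) :
    pfun m E i < i ∧ pfun m E i ∈ insert (0 : Fin (m+2)) (Finset.univ \ E) ∧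
      ∀ k ∈ insert (0 : Fin (m+2)) (Finset.univ \ E), k < i → k ≤ pfun m E i := by
  classical
  have hi0 : (0 : Fin (m+2)) < i :=
    Fin.pos_iff_ne_zero.mpr (by rintro rfl; exact hi hE0)
  have hne : (((insert (0 : Fin (m+2)) (Finset.univ \ E)).filter (fun k => k < i))).Nonempty :=
    ⟨0, by simp [hi0]⟩
  have hpf : pfun m E i
      = ((insert (0 : Fin (m+2)) (Finset.univ \ E)).filter (fun k => k < i)).max' hne := by
    rw [pfun, if_neg hi, ← Finset.coe_max' hne, WithBot.unbotD_coe]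
  have hmm := Finset.max'_mem _ hne
  rw [Finset.mem_filter] at hmm
  refine ⟨?_, ?_, ?_⟩
  · rw [hpf]; exact hmm.2
  · rw [hpf]; exact hmm.1
  · intro k hk hik
    rw [hpf]
    refine Finset.le_max' _ k ?_
    rw [Finset.mem_filter]
    exact ⟨hk, hik⟩

lemma pfun_injective {m : ℕ} {E : Finset (Fin (m+2))} (hE0 : (0 : Fin (m+2)) ∈ E)
    (hEL : Fin.last (m+1) ∉ E) : Function.Injective (pfun m E) := by
  classical
  have key : ∀ a b : Fin (m+2), a < b → pfun m E a = pfun m E b → False := by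
    intro a b hab heq
    by_cases ha : a ∈ E <;> by_cases hb : b ∈ E
    · obtain ⟨ha1, -, ha3⟩ := pfun_mem_spec hEL ha
      obtain ⟨hb1, -, -⟩ := pfun_mem_spec hEL hb
      have := ha3 b (Finset.mem_insert_of_mem hb) hab
      rw [heq] at this
      exact absurd this (not_le.mpr hb1)
    · -- a ∈ E, b ∉ E : common value v with a < v < b
      obtain ⟨ha1, ha2, -⟩ := pfun_mem_spec hEL ha
      obtain ⟨hb1, hb2, -⟩ := pfun_not_mem_spec hE0 hb
      rw [heq] at ha1 ha2
      rw [Finset.mem_insert] at ha2 hb2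
      rcases ha2 with h | h
      · rw [h] at hb1
        exact absurd (Fin.le_last b) (not_le.mpr hb1)
      · rcases hb2 with h' | h'
        · rw [h'] at ha1
          exact absurd ha1 (by simp)
        · rw [Finset.mem_sdiff] at h'
          exact h'.2 h
    · -- a ∉ E, b ∈ E : pfun a < a < b < pfun b
      obtain ⟨ha1, -, -⟩ := pfun_not_mem_spec hE0 ha
      obtain ⟨hb1, -, -⟩ := pfun_mem_spec hEL hb
      rw [heq] at ha1
      exact absurd (lt_trans (lt_trans ha1 hab) hb1) (lt_irrefl _)
    · -- both outside E
      obtain ⟨ha1, -, -⟩ := pfun_not_mem_spec hE0 ha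
      obtain ⟨-, -, hb3⟩ := pfun_not_mem_spec hE0 hb
      have := hb3 a (Finset.mem_insert_of_mem (Finset.mem_sdiff.mpr ⟨Finset.mem_univ a, ha⟩)) hab
      rw [← heq] at this
      exact absurd this (not_le.mpr ha1)
  intro a b hab
  by_contra hne
  rcases lt_or_gt_of_ne hne with h | h
  · exact key a b h hab
  · exact key b a h hab.symm

end FinPart

/-- The permutation associated to an admissible excedance set. -/
noncomputable def permOfSet {m : ℕ} (E : Finset (Fin (m+2))) (hE0 : (0 : Fin (m+2)) ∈ E)
    (hEL : Fin.last (m+1) ∉ E) : Equiv.Perm (Fin (m+2)) :=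
  Equiv.ofBijective (pfun m E)
    (Finite.injective_iff_bijective.mp (pfun_injective hE0 hEL))

@[simp] lemma permOfSet_apply {m : ℕ} (E : Finset (Fin (m+2))) (hE0 : (0 : Fin (m+2)) ∈ E)
    (hEL : Fin.last (m+1) ∉ E) (i : Fin (m+2)) : permOfSet E hE0 hEL i = pfun m E i := rfl

lemma permOfSet_lt_iff {m : ℕ} (E : Finset (Fin (m+2))) (hE0 : (0 : Fin (m+2)) ∈ E)
    (hEL : Fin.last (m+1) ∉ E) (i : Fin (m+2)) :
    i < pfun m E i ↔ i ∈ E := by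
  constructor
  · intro h
    by_contra hi
    exact absurd (lt_trans h (pfun_not_mem_spec hE0 hi).1) (lt_irrefl i)
  · intro hi
    exact (pfun_mem_spec hEL hi).1

lemma permOfSet_derangement {m : ℕ} (E : Finset (Fin (m+2))) (hE0 : (0 : Fin (m+2)) ∈ E)
    (hEL : Fin.last (m+1) ∉ E) (i : Fin (m+2)) : pfun m E i ≠ i := by
  by_cases hi : i ∈ E
  · exact ne_of_gt (pfun_mem_spec hEL hi).1
  · exact ne_of_lt (pfun_not_mem_spec hE0 hi).1

/-- The exit from E is exactly the max of E, and it maps to `last`. -/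
lemma pfun_peak_iff {m : ℕ} (E : Finset (Fin (m+2))) (hE0 : (0 : Fin (m+2)) ∈ E)
    (hEL : Fin.last (m+1) ∉ E) (i : Fin (m+2)) :
    (i < pfun m E i ∧ pfun m E (pfun m E i) < pfun m E i) ↔ i = E.max' ⟨0, hE0⟩ := by
  classical
  have hmaxmem := E.max'_mem ⟨0, hE0⟩
  have hmaxlt : E.max' ⟨0, hE0⟩ < Fin.last (m+1) :=
    lt_of_le_of_ne (Fin.le_last _) (by intro h; exact hEL (h ▸ hmaxmem))
  constructor
  · rintro ⟨h1, h2⟩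
    have hi : i ∈ E := (permOfSet_lt_iff E hE0 hEL i).mp h1
    have hv : pfun m E i ∉ E := by
      intro hv
      exact absurd (pfun_mem_spec hEL hv).1 (not_lt.mpr (le_of_lt h2))
    -- so pfun i = last
    obtain ⟨-, hmem2, hbd⟩ := pfun_mem_spec hEL hi
    rw [Finset.mem_insert] at hmem2
    have hL : pfun m E i = Fin.last (m+1) := by
      rcases hmem2 with h | h
      · exact h
      · exact absurd h hv
    by_contra hne
    have hlt : i < E.max' ⟨0, hE0⟩ := lt_of_le_of_ne (E.le_max' i hi) hne
    have := hbd (E.max' ⟨0, hE0⟩) (Finset.mem_insert_of_mem hmaxmem) hlt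
    rw [hL] at this
    exact absurd (lt_of_le_of_lt this hmaxlt) (lt_irrefl _)
  · rintro rfl
    obtain ⟨h1, hmem2, -⟩ := pfun_mem_spec hEL hmaxmem
    have hL : pfun m E (E.max' ⟨0, hE0⟩) = Fin.last (m+1) := by
      rw [Finset.mem_insert] at hmem2
      rcases hmem2 with h | h
      · exact h
      · exact absurd (E.le_max' _ h) (not_le.mpr h1)
    refine ⟨h1, ?_⟩
    rw [hL]
    exact (pfun_not_mem_spec hE0 hEL).1

lemma permOfSet_cpk {m : ℕ} (E : Finset (Fin (m+2))) (hE0 : (0 : Fin (m+2)) ∈ E)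
    (hEL : Fin.last (m+1) ∉ E) :
    cpk (m+2) (permOfSet E hE0 hEL) = 1 := by
  classical
  rw [cpk]
  have : (Finset.univ.filter
      (fun i : Fin (m+2) => i < permOfSet E hE0 hEL i ∧
        permOfSet E hE0 hEL (permOfSet E hE0 hEL i) < permOfSet E hE0 hEL i))
      = {E.max' ⟨0, hE0⟩} := by
    ext i
    simp only [Finset.mem_filter, Finset.mem_univ, true_and, Finset.mem_singleton,
      permOfSet_apply]
    convert pfun_peak_iff E hE0 hEL i using 1
    exact Finset.mem_filter.trans (by simp)
  rw [this, Finset.card_singleton]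

/-- Any derangement with exactly one cyclic peak is the canonical permutation of
its excedance set. -/
lemma eq_pfun_of_one_peak {m : ℕ} (π : Equiv.Perm (Fin (m+2))) (hd : ∀ i, π i ≠ i)
    (h1 : (Finset.univ.filter
      (fun i : Fin (m+2) => i < π i ∧ π (π i) < π i)).card = 1) (i : Fin (m+2)) :
    π i = pfun m (Finset.univ.filter (fun j => j < π j)) i := by
  classical
  set E := Finset.univ.filter (fun j : Fin (m+2) => j < π j) with hE
  obtain ⟨ha, hb⟩ := one_peak_structure π hd h1
  have hval : (univ.filter (fun i : Fin (m+2) => π i < i ∧ π i < π (π i))).card = 1 := by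
    rw [← peak_card_eq_valley_card π hd]; exact h1
  obtain ⟨ha', hb'⟩ := one_valley_structure π hd hval
  by_cases hi : i ∈ E
  · have hi' : i < π i := by
      rw [hE, Finset.mem_filter] at hi; exact hi.2
    have hmin : ((insert (Fin.last (m+1)) E).filter (fun k => i < k)).min
        = (π i : WithTop (Fin (m+2))) := by
      apply le_antisymm
      · apply Finset.min_le
        rw [Finset.mem_filter, Finset.mem_insert]
        refine ⟨?_, hi'⟩
        rcases (show π (π i) ≠ π i from fun h => hd i (π.injective h)).lt_or_gt with h | h
        · left
          exact le_antisymm (Fin.le_last _) (ha i hi' h (Fin.last (m+1)))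
        · right
          rw [hE, Finset.mem_filter]
          exact ⟨mem_univ _, h⟩
      · apply Finset.le_min
        intro b hb2
        rw [Finset.mem_filter, Finset.mem_insert] at hb2
        obtain ⟨hb2, hib⟩ := hb2
        rcases hb2 with rfl | hbE
        · exact WithTop.coe_le_coe.mpr (Fin.le_last _)
        · rw [hE, Finset.mem_filter] at hbE
          exact WithTop.coe_le_coe.mpr (hb i b hi' hib hbE.2)
    rw [pfun, if_pos hi, hmin, WithTop.untopD_coe]
  · have hi' : π i < i := by
      have hni : ¬ i < π i := by
        intro h; exact hi (by rw [hE, Finset.mem_filter]; exact ⟨mem_univ _, h⟩)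
      exact lt_of_le_of_ne (not_lt.mp hni) (hd i)
    have hmax : ((insert (0 : Fin (m+2)) (Finset.univ \ E)).filter (fun k => k < i)).max
        = (π i : WithBot (Fin (m+2))) := by
      apply le_antisymm
      · apply Finset.max_le
        intro b hb2
        rw [Finset.mem_filter, Finset.mem_insert] at hb2
        obtain ⟨hb2, hib⟩ := hb2
        rcases hb2 with rfl | hbF
        · exact WithBot.coe_le_coe.mpr (Fin.zero_le _)
        · rw [Finset.mem_sdiff, hE, Finset.mem_filter] at hbF
          have hbb : π b < b :=
            lt_of_le_of_ne (not_lt.mp (fun h => hbF.2 ⟨mem_univ _, h⟩)) (hd b)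
          exact WithBot.coe_le_coe.mpr (hb' i b hi' hib hbb)
      · apply Finset.le_max
        rw [Finset.mem_filter, Finset.mem_insert]
        refine ⟨?_, hi'⟩
        rcases (show π (π i) ≠ π i from fun h => hd i (π.injective h)).lt_or_gt with h | h
        · right
          rw [Finset.mem_sdiff, hE, Finset.mem_filter]
          exact ⟨mem_univ _, fun hc => absurd hc.2 (not_lt.mpr (le_of_lt h))⟩
        · left
          exact le_antisymm (ha' i hi' h 0) (Fin.zero_le _)
    rw [pfun, if_neg hi, hmax, WithBot.unbotD_coe]

/-- For n ≥ 2, the number of derangements of [n] with exactly one cyclic peak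
is 2^(n-2). -/
theorem derangements_one_cpk (n : ℕ) (hn : 2 ≤ n) :
    (Finset.univ.filter
      (fun π : Equiv.Perm (Fin n) => (∀ i, π i ≠ i) ∧ cpk n π = 1)).card
      = 2 ^ (n - 2) := by
  classical
  obtain ⟨m, rfl⟩ : ∃ m, n = m + 2 := ⟨n - 2, by omega⟩
  have hL0 : Fin.last (m+1) ≠ (0 : Fin (m+2)) := by
    simp [Fin.ext_iff]
  have hcard : (Finset.univ.filter
      (fun π : Equiv.Perm (Fin (m+2)) => (∀ i, π i ≠ i) ∧ cpk (m+2) π = 1)).card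
      = (Finset.univ.filter
        (fun E : Finset (Fin (m+2)) => (0 : Fin (m+2)) ∈ E ∧ Fin.last (m+1) ∉ E)).card := by
    refine Finset.card_bij'
      (fun π _ => Finset.univ.filter (fun j => j < π j))
      (fun E hE => permOfSet E (Finset.mem_filter.mp hE).2.1 (Finset.mem_filter.mp hE).2.2)
      ?_ ?_ ?_ ?_
    · -- i maps into t
      intro π hπ
      rw [Finset.mem_filter] at hπ
      obtain ⟨-, hd, -⟩ := hπ
      rw [Finset.mem_filter]
      refine ⟨Finset.mem_univ _, ?_, ?_⟩
      · rw [Finset.mem_filter]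
        exact ⟨Finset.mem_univ _, Fin.pos_iff_ne_zero.mpr (hd 0)⟩
      · rw [Finset.mem_filter]
        rintro ⟨-, h⟩
        exact absurd h (not_lt.mpr (Fin.le_last _))
    · -- j maps into s
      intro E hE
      rw [Finset.mem_filter]
      refine ⟨Finset.mem_univ _, ?_, ?_⟩
      · intro i
        exact permOfSet_derangement E (Finset.mem_filter.mp hE).2.1
          (Finset.mem_filter.mp hE).2.2 i
      · exact permOfSet_cpk E (Finset.mem_filter.mp hE).2.1 (Finset.mem_filter.mp hE).2.2
    · -- left inverse
      intro π hπ
      rw [Finset.mem_filter] at hπ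
      obtain ⟨-, hd, hpk⟩ := hπ
      apply Equiv.ext
      intro x
      rw [permOfSet_apply]
      exact (eq_pfun_of_one_peak π hd hpk x).symm
    · -- right inverse
      intro E hE
      rw [Finset.mem_filter] at hE
      obtain ⟨-, hE0, hEL⟩ := hE
      ext i
      rw [Finset.mem_filter]
      simp only [permOfSet_apply]
      rw [permOfSet_lt_iff E hE0 hEL i]
      simp
  rw [hcard]
  -- count the admissible sets
  have hc2 : (Finset.univ.filter
      (fun E : Finset (Fin (m+2)) => (0 : Fin (m+2)) ∈ E ∧ Fin.last (m+1) ∉ E)).card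
      = ((((Finset.univ : Finset (Fin (m+2))).erase (Fin.last (m+1))).erase 0)).powerset.card := by
    refine Finset.card_bij'
      (fun E _ => E.erase 0)
      (fun S _ => insert (0 : Fin (m+2)) S)
      ?_ ?_ ?_ ?_
    · intro E hE
      rw [Finset.mem_filter] at hE
      obtain ⟨-, hE0, hEL⟩ := hE
      rw [Finset.mem_powerset]
      intro x hx
      rw [Finset.mem_erase] at hx
      rw [Finset.mem_erase, Finset.mem_erase]
      exact ⟨hx.1, fun h => hEL (h ▸ hx.2), Finset.mem_univ _⟩
    · intro S hS
      rw [Finset.mem_powerset] at hS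
      rw [Finset.mem_filter]
      refine ⟨Finset.mem_univ _, Finset.mem_insert_self _ _, ?_⟩
      rw [Finset.mem_insert]
      rintro (h | h)
      · exact hL0 h
      · have := hS h
        rw [Finset.mem_erase, Finset.mem_erase] at this
        exact this.2.1 rfl
    · intro E hE
      rw [Finset.mem_filter] at hE
      exact Finset.insert_erase hE.2.1
    · intro S hS
      rw [Finset.mem_powerset] at hS
      apply Finset.erase_insert
      intro h
      have := hS h
      rw [Finset.mem_erase, Finset.mem_erase] at this
      exact this.1 rfl
  rw [hc2, Finset.card_powerset, Finset.card_erase_of_mem, Finset.card_erase_of_mem,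
    Finset.card_univ, Fintype.card_fin]
  · norm_num
  · exact Finset.mem_univ _
  · rw [Finset.mem_erase]
    exact ⟨Ne.symm hL0, Finset.mem_univ _⟩
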